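/- arXiv:2110.08024 — 2 statements merged into one kernel-verified Lean document; each statement's English description precedes it below -/
import Mathlib

section
/- For any vectors v ∈ ℝ³, E, B, c ∈ ℝ³ and scalars α, β ∈ ℝ, the vector v' produced by the Boris algorithm — namely t = (β/2)B, s = 2t/(1 + t·t), v⁻ = v + (α/2)E + (1/2)c, v* = v⁻ + v⁻ × t, v⁺ = v⁻ + v* × s, v' = v⁺ + (α/2)E + (1/2)c — satisfies the implicit equation v' = v + αE + β((v + v')/2) × B + c. -/
noncomputable section

/-- Dot product on ℝ³. -/
def dot3 (a b : Fin 3 → ℝ) : ℝ := a 0 * b 0 + a 1 * b 1 + a 2 * b 2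

/-- Cross product on ℝ³. -/
def cross3 (a b : Fin 3 → ℝ) : Fin 3 → ℝ :=
  ![a 1 * b 2 - a 2 * b 1, a 2 * b 0 - a 0 * b 2, a 0 * b 1 - a 1 * b 0]

/-- Euclidean norm on ℝ³. -/
def enorm3 (a : Fin 3 → ℝ) : ℝ := Real.sqrt (dot3 a a)

lemma cross3_apply0 (a b : Fin 3 → ℝ) : cross3 a b 0 = a 1 * b 2 - a 2 * b 1 := rfl
lemma cross3_apply1 (a b : Fin 3 → ℝ) : cross3 a b 1 = a 2 * b 0 - a 0 * b 2 := rfl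
lemma cross3_apply2 (a b : Fin 3 → ℝ) : cross3 a b 2 = a 0 * b 1 - a 1 * b 0 := rfl

lemma fin3_mk_two : (⟨2, by omega⟩ : Fin 3) = (2 : Fin 3) := rfl

lemma cross3_smul_left (r : ℝ) (a b : Fin 3 → ℝ) :
    cross3 (r • a) b = r • cross3 a b := by
  funext i
  fin_cases i <;>
    simp only [cross3_apply0, cross3_apply1, cross3_apply2, Pi.smul_apply, smul_eq_mul,
      Fin.isValue, Fin.zero_eta, Fin.mk_one, fin3_mk_two] <;> ring

lemma cross3_smul_right (r : ℝ) (a b : Fin 3 → ℝ) :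
    cross3 a (r • b) = r • cross3 a b := by
  funext i
  fin_cases i <;>
    simp only [cross3_apply0, cross3_apply1, cross3_apply2, Pi.smul_apply, smul_eq_mul,
      Fin.isValue, Fin.zero_eta, Fin.mk_one, fin3_mk_two] <;> ring

lemma boris_core (w t : Fin 3 → ℝ) :
    (w + cross3 (w + cross3 w t) ((2 / (1 + dot3 t t)) • t)) - w =
      cross3 (w + (w + cross3 (w + cross3 w t) ((2 / (1 + dot3 t t)) • t))) t := by
  have h1 : (1 + (t 0 * t 0 + t 1 * t 1 + t 2 * t 2) : ℝ) ≠ 0 := by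
    have := mul_self_nonneg (t 0); have := mul_self_nonneg (t 1); have := mul_self_nonneg (t 2)
    intro h; linarith
  funext i
  fin_cases i <;>
  · simp only [Pi.add_apply, Pi.sub_apply, Pi.smul_apply, smul_eq_mul,
      cross3_apply0, cross3_apply1, cross3_apply2, dot3, Fin.isValue, Fin.zero_eta, Fin.mk_one, fin3_mk_two]
    field_simp
    ring

/-- Boris' trick solves the implicit velocity update. -/
theorem boris_trick_solves_implicit_update
    (v E B c : Fin 3 → ℝ) (α β : ℝ) :
    let t := (β / 2) • B
    let s := (2 / (1 + dot3 t t)) • t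
    let vminus := v + (α / 2) • E + (1 / 2 : ℝ) • c
    let vstar := vminus + cross3 vminus t
    let vplus := vminus + cross3 vstar s
    let v' := vplus + (α / 2) • E + (1 / 2 : ℝ) • c
    v' = v + α • E + β • cross3 ((1 / 2 : ℝ) • (v + v')) B + c := by
  intro t s vminus vstar vplus v'
  have key : vplus - vminus = cross3 (vminus + vplus) t := boris_core vminus t
  have hsum : v + v' = vminus + vplus := by
    show v + (vplus + (α / 2) • E + (1 / 2 : ℝ) • c)
        = (v + (α / 2) • E + (1 / 2 : ℝ) • c) + vplus
    module
  have hcross : β • cross3 ((1 / 2 : ℝ) • (v + v')) B = cross3 (v + v') t := by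
    rw [cross3_smul_left, show t = (β / 2) • B from rfl, cross3_smul_right]
    module
  rw [hcross, hsum, ← key]
  show vplus + (α / 2) • E + (1 / 2 : ℝ) • c
      = v + α • E + (vplus - (v + (α / 2) • E + (1 / 2 : ℝ) • c)) + c
  module
end
end

section
/- Let B ∈ ℝ³ and define t = (β/2)B and s = 2t/(1 + t·t). Then for any v⁻ ∈ ℝ³, the vector v⁺ = v⁻ + (v⁻ + v⁻ × t) × s satisfies ‖v⁺‖ = ‖v⁻‖. -/
noncomputable section

set_option maxHeartbeats 2000000 in
private lemma boris_key (v0 v1 v2 t0 t1 t2 c : ℝ)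
    (hc : c * (1 + (t0 * t0 + t1 * t1 + t2 * t2)) = 2) :
    (v0 + ((v1 + (v2 * t0 - v0 * t2)) * (c * t2) - (v2 + (v0 * t1 - v1 * t0)) * (c * t1))) ^ 2
  + (v1 + ((v2 + (v0 * t1 - v1 * t0)) * (c * t0) - (v0 + (v1 * t2 - v2 * t1)) * (c * t2))) ^ 2
  + (v2 + ((v0 + (v1 * t2 - v2 * t1)) * (c * t1) - (v1 + (v2 * t0 - v0 * t2)) * (c * t0))) ^ 2
  = v0 ^ 2 + v1 ^ 2 + v2 ^ 2 := by
  linear_combination (((v1*t2 - v2*t1)^2 + (v2*t0 - v0*t2)^2 + (v0*t1 - v1*t0)^2) * c) * hc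

set_option maxHeartbeats 2000000 in
/-- The rotation step of the Boris algorithm preserves the Euclidean norm. -/
theorem boris_rotation_preserves_norm (B : Fin 3 → ℝ) (β : ℝ) (vminus : Fin 3 → ℝ) :
    let t := (β / 2) • B
    let s := (2 / (1 + dot3 t t)) • t
    let vplus := vminus + cross3 (vminus + cross3 vminus t) s
    enorm3 vplus = enorm3 vminus := by
  intro t s vplus
  have hd : (0:ℝ) < 1 + dot3 t t := by
    have h : 0 ≤ dot3 t t := by
      simp only [dot3]
      nlinarith [mul_self_nonneg (t 0), mul_self_nonneg (t 1), mul_self_nonneg (t 2)]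
    linarith
  obtain ⟨c, hcdef⟩ : ∃ c : ℝ, c = 2 / (1 + dot3 t t) := ⟨_, rfl⟩
  have hcdef2 : c = 2 / (1 + (t 0 * t 0 + t 1 * t 1 + t 2 * t 2)) := by
    rw [hcdef]; rfl
  have hc : c * (1 + (t 0 * t 0 + t 1 * t 1 + t 2 * t 2)) = 2 := by
    rw [hcdef2]
    have hne : (1 + (t 0 * t 0 + t 1 * t 1 + t 2 * t 2)) ≠ 0 := by
      simp only [dot3] at hd; linarith
    field_simp
  have key : dot3 vplus vplus = dot3 vminus vminus := by
    have h := boris_key (vminus 0) (vminus 1) (vminus 2) (t 0) (t 1) (t 2) c hc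
    simp only [vplus, s, dot3, cross3, Pi.add_apply, Pi.smul_apply, smul_eq_mul,
      Matrix.cons_val_zero, Matrix.cons_val_one, Matrix.head_cons,
      Matrix.cons_val_two, Matrix.tail_cons, ← hcdef, ← hcdef2]
    linear_combination h
  simp only [enorm3, key]
end
end
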